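/- Let r be a natural number, let A and B be unimodular integer matrices of size (2r+1)×(2r+1), let P be a (2r+1)×(2r+1) integer matrix and k an integer such that Pᵀ A P = k·B. Then |k| is a perfect square, i.e., there exists an integer m with |k| = m². (This is the algebraic content of: if M and L are closed oriented 2n-manifolds with rank H̄ⁿ(M;ℤ) = rank H̄ⁿ(L;ℤ) = 2r+1, then the absolute value of the degree of any map f: M → L is the square of an integer.) -/
import Mathlib


open Matrix

theorem abs_degree_is_square_of_odd_rank {r : ℕ}
    (A B P : Matrix (Fin (2 * r + 1)) (Fin (2 * r + 1)) ℤ)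
    (hA : A.det = 1 ∨ A.det = -1) (hB : B.det = 1 ∨ B.det = -1)
    (k : ℤ) (h : Pᵀ * A * P = k • B) : ∃ m : ℤ, |k| = m ^ 2 := by
  have hdet : P.det ^ 2 * A.det = k ^ (2 * r + 1) * B.det := by
    have := congrArg Matrix.det h
    rw [det_mul, det_mul, det_transpose, det_smul, Fintype.card_fin] at this
    linear_combination this
  have hAabs : |A.det| = 1 := by rcases hA with h1 | h1 <;> simp [h1]
  have hBabs : |B.det| = 1 := by rcases hB with h1 | h1 <;> simp [h1]
  have habs : |P.det| ^ 2 = |k| ^ (2 * r + 1) := by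
    have := congrArg abs hdet
    rwa [abs_mul, abs_mul, abs_pow, abs_pow, hAabs, hBabs, mul_one, mul_one] at this
  have hQ : ((|k| : ℤ) : ℚ) ^ (2 * r + 1) = ((|P.det| : ℤ) : ℚ) ^ 2 := by
    exact_mod_cast congrArg (fun z : ℤ => ((z : ℚ))) habs.symm
  have hcop : Nat.Coprime (2 * r + 1) 2 := by
    simp [Nat.coprime_two_right, Nat.odd_iff]
  obtain ⟨c, hc, -⟩ := (pow_eq_pow_iff_of_coprime hcop).mp hQ
  have hsq : IsSquare ((|k| : ℤ) : ℚ) := ⟨c, by rw [hc]; ring⟩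
  obtain ⟨m, hm⟩ := Rat.isSquare_intCast_iff.mp hsq
  exact ⟨m, by rw [hm, sq]⟩
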